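/- Let x_1,...,x_d be vectors in a Hilbert space H with positive definite Gram matrix. Fix j and S ⊆ [d]\{j}, and define T_j(S) = {T ⊆ [d]\{j} : P_T P_j = P_S P_j}. Then T_j(S) is closed under unions: if T_1, T_2 ∈ T_j(S) then T_1 ∪ T_2 ∈ T_j(S). -/

import Mathlib

theorem stmt_6 {H : Type*} [NormedAddCommGroup H] [InnerProductSpace ℝ H] [CompleteSpace H]
    {d : ℕ} (x : Fin d → H)
    (hGram : (Matrix.of fun (i j : Fin d) => (inner ℝ (x i) (x j) : ℝ)).PosDef)
    (P : Finset (Fin d) → H →L[ℝ] H)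
    (hsa : ∀ A, IsSelfAdjoint (P A))
    (hidem : ∀ A, P A * P A = P A)
    (hrange : ∀ A : Finset (Fin d), LinearMap.range (P A : H →ₗ[ℝ] H) = Submodule.span ℝ (x '' ↑A))
    (j : Fin d) (S : Finset (Fin d)) (hS : j ∉ S)
    (T₁ T₂ : Finset (Fin d)) (h1 : j ∉ T₁) (h2 : j ∉ T₂)
    (e1 : P T₁ * P {j} = P S * P {j}) (e2 : P T₂ * P {j} = P S * P {j}) :
    P (T₁ ∪ T₂) * P {j} = P S * P {j} := by
  have hmem : ∀ (A : Finset (Fin d)) (y : H), P A y ∈ Submodule.span ℝ (x '' ↑A) := by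
    intro A y
    rw [← hrange]
    exact ⟨y, rfl⟩
  have hfix : ∀ (A : Finset (Fin d)) (w : H), w ∈ Submodule.span ℝ (x '' ↑A) → P A w = w := by
    intro A w hw
    rw [← hrange] at hw
    obtain ⟨u, rfl⟩ := hw
    have := congrArg (fun f : H →L[ℝ] H => f u) (hidem A)
    simpa using this
  have hsym : ∀ (A : Finset (Fin d)) (u w : H), (inner ℝ (P A u) w : ℝ) = inner ℝ u (P A w) := by
    intro A u w
    exact (hsa A).isSymmetric u w
  have horth : ∀ (A : Finset (Fin d)) (y w : H), w ∈ Submodule.span ℝ (x '' ↑A) →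
      (inner ℝ (y - P A y) w : ℝ) = 0 := by
    intro A y w hw
    rw [← hfix A w hw, ← hsym]
    have hz : P A (y - P A y) = 0 := by
      have := congrArg (fun f : H →L[ℝ] H => f y) (hidem A)
      simp only [ContinuousLinearMap.mul_apply] at this
      simp [map_sub, this]
    simp [hz]
  have huniq : ∀ (A : Finset (Fin d)) (y v : H), v ∈ Submodule.span ℝ (x '' ↑A) →
      (∀ w ∈ Submodule.span ℝ (x '' ↑A), (inner ℝ (y - v) w : ℝ) = 0) → P A y = v := by
    intro A y v hv hperp
    have hm : P A y - v ∈ Submodule.span ℝ (x '' ↑A) := sub_mem (hmem A y) hv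
    have h0 : (inner ℝ (P A y - v) (P A y - v) : ℝ) = 0 := by
      have e : P A y - v = (y - v) - (y - P A y) := by abel
      rw [show (inner ℝ (P A y - v) (P A y - v) : ℝ) =
        inner ℝ ((y - v) - (y - P A y)) (P A y - v) by rw [← e],
        inner_sub_left, hperp _ hm, horth A y _ hm, sub_zero]
    exact sub_eq_zero.mp (inner_self_eq_zero.mp h0)
  have hxj : x j ∈ Submodule.span ℝ (x '' ↑({j} : Finset (Fin d))) :=
    Submodule.subset_span (by simp)
  have hx : P {j} (x j) = x j := hfix _ _ hxj
  have k1 : P T₁ (x j) = P S (x j) := by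
    have := congrArg (fun f : H →L[ℝ] H => f (x j)) e1
    simpa [hx] using this
  have k2 : P T₂ (x j) = P S (x j) := by
    have := congrArg (fun f : H →L[ℝ] H => f (x j)) e2
    simpa [hx] using this
  have hmono : Submodule.span ℝ (x '' ↑T₁) ≤ Submodule.span ℝ (x '' ↑(T₁ ∪ T₂)) :=
    Submodule.span_mono (Set.image_mono (by simp [Finset.subset_union_left]))
  have key : P (T₁ ∪ T₂) (x j) = P S (x j) := by
    apply huniq
    · exact hmono (k1 ▸ hmem T₁ (x j))
    · intro w hw
      induction hw using Submodule.span_induction with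
      | mem w hw =>
        obtain ⟨i, hi, rfl⟩ := hw
        simp only [Finset.coe_union, Set.mem_union, Finset.mem_coe] at hi
        rcases hi with hi | hi
        · have := horth T₁ (x j) (x i) (Submodule.subset_span ⟨i, by simpa using hi, rfl⟩)
          rwa [k1] at this
        · have := horth T₂ (x j) (x i) (Submodule.subset_span ⟨i, by simpa using hi, rfl⟩)
          rwa [k2] at this
      | zero => simp
      | add a b _ _ ha hb => rw [inner_add_right, ha, hb, add_zero]
      | smul c a _ ha => rw [inner_smul_right, ha, mul_zero]
  ext y
  simp only [ContinuousLinearMap.mul_apply]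
  have hy : P {j} y ∈ Submodule.span ℝ ({x j} : Set H) := by
    have := hmem {j} y
    simpa using this
  obtain ⟨c, hc⟩ := Submodule.mem_span_singleton.mp hy
  rw [← hc, map_smul, map_smul, key]
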